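/- Let R be a commutative ring and M an R-module. Then M is universally torsionless (the natural map M ⊗_R N → Hom_R(M*,N) is injective for all R-modules N) if and only if there exist an index set I and an R-linear map ι: M → ∏_{i∈I} R such that for every commutative R-algebra S the induced map M ⊗_R S → ∏_{i∈I} S is injective. -/

import Mathlib

open TensorProduct

/-- The natural map `M ⊗ N → Hom(M*, N)`, `m ⊗ n ↦ (w ↦ w m • n)`. -/
noncomputable def natMap (R : Type*) [CommRing R] (M : Type*) [AddCommGroup M] [Module R M]
    (N : Type*) [AddCommGroup N] [Module R N] :
    M ⊗[R] N →ₗ[R] ((M →ₗ[R] R) →ₗ[R] N) :=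
  (dualTensorHom R (Module.Dual R M) N).comp (LinearMap.rTensor N (Module.Dual.eval R M))

/-- Given `ι : M → ∏ I, R`, the induced map `M ⊗ S → ∏ I, S`, `m ⊗ s ↦ (i ↦ ι m i • s)`. -/
noncomputable def prodMap (R : Type*) [CommRing R] (M : Type*) [AddCommGroup M] [Module R M]
    (I : Type*) (iota : M →ₗ[R] (I → R)) (S : Type*) [CommRing S] [Algebra R S] :
    M ⊗[R] S →ₗ[R] (I → S) :=
  TensorProduct.lift <| LinearMap.mk₂ R (fun m s i => iota m i • s)
    (fun m m' s => by funext i; simp [add_smul])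
    (fun r m s => by funext i; simp [mul_smul])
    (fun m s s' => by funext i; simp [smul_add])
    (fun r m s => by funext i; exact smul_comm _ _ _)

universe u v

variable {R : Type u} [CommRing R] {M : Type v} [AddCommGroup M] [Module R M]

@[simp] lemma natMap_tmul (N : Type*) [AddCommGroup N] [Module R N] (m : M) (n : N)
    (w : M →ₗ[R] R) : natMap R M N (m ⊗ₜ n) w = w m • n := by
  simp [natMap]

lemma small_quot_ann : Small.{v} (R ⧸ Module.annihilator R M) := by
  letI : Module (R ⧸ Module.annihilator R M) M :=
    (Module.isTorsionBySet_annihilator R M).module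
  apply small_of_injective (f := fun (a : R ⧸ Module.annihilator R M) => fun m : M => a • m)
  intro a b hab
  obtain ⟨r, rfl⟩ := Ideal.Quotient.mk_surjective a
  obtain ⟨s, rfl⟩ := Ideal.Quotient.mk_surjective b
  rw [Ideal.Quotient.eq, Module.mem_annihilator]
  intro m
  have := congrFun hab m
  simp only [(Module.isTorsionBySet_annihilator R M).mk_smul] at this
  rw [sub_smul, this, sub_self]

lemma dualSystem
    (h : ∀ (N : Type v) [AddCommGroup N] [Module R N], Function.Injective (natMap R M N))
    (t : ℕ) (m : Fin t → M) :
    ∃ (k : ℕ) (w : Fin k → (M →ₗ[R] R)) (u : Fin k → M),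
      ∀ j, m j = ∑ i, w i (m j) • u i := by
  classical
  set K := Module.annihilator R M with hK
  set G : Set (Fin t → R) :=
    {f | (∃ w : M →ₗ[R] R, f = fun j => w (m j)) ∨ ∀ j, f j ∈ K} with hG
  set D : Submodule R (Fin t → R) := Submodule.span R G with hD
  -- Smallness of the quotient
  have hsmall : Small.{v} ((Fin t → R) ⧸ D) := by
    haveI : Small.{v} (R ⧸ K) := small_quot_ann
    set p : (Fin t → R) → (Fin t → R ⧸ K) := fun f j => Ideal.Quotient.mk K (f j) with hp
    have hpsurj : Function.Surjective p := by
      intro q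
      choose f hf using fun j => Ideal.Quotient.mk_surjective (q j)
      exact ⟨f, funext hf⟩
    apply small_of_surjective
      (f := fun q : Fin t → R ⧸ K => D.mkQ (Function.surjInv hpsurj q))
    intro z
    obtain ⟨f, rfl⟩ := D.mkQ_surjective z
    refine ⟨p f, ?_⟩
    rw [← sub_eq_zero, ← map_sub, Submodule.mkQ_apply, Submodule.Quotient.mk_eq_zero]
    apply Submodule.subset_span
    right
    intro j
    have h2 := congrFun (Function.surjInv_eq hpsurj (p f)) j
    simp only [hp] at h2
    simpa [Pi.sub_apply] using Ideal.Quotient.eq.mp h2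
  set Nb := (Fin t → R) ⧸ D with hNb
  letI := hsmall
  set e : Nb ≃ₗ[R] Shrink.{v} Nb := (Shrink.linearEquiv R Nb).symm with he
  set q : (Fin t → R) →ₗ[R] Shrink.{v} Nb := e.toLinearMap ∘ₗ D.mkQ with hq
  set x : M ⊗[R] Shrink.{v} Nb :=
    ∑ j, m j ⊗ₜ q (Pi.single j (1 : R)) with hx
  have hx0 : x = 0 := by
    apply h (Shrink.{v} Nb)
    rw [map_zero]
    ext w : 1
    simp only [hx, map_sum, LinearMap.coe_sum, Finset.sum_apply, natMap_tmul,
      LinearMap.zero_apply]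
    have h3 : ∀ j : Fin t, w (m j) • q (Pi.single j (1 : R))
        = q (Pi.single j (w (m j))) := by
      intro j
      rw [← map_smul, ← Pi.single_smul, smul_eq_mul, mul_one]
    simp only [h3, ← map_sum]
    have hsum : (∑ j, Pi.single j (w (m j)) : Fin t → R) = fun j => w (m j) :=
      Finset.univ_sum_single _
    rw [hsum]
    have h4 : D.mkQ (fun j => w (m j)) = 0 := by
      rw [Submodule.mkQ_apply, Submodule.Quotient.mk_eq_zero]
      exact Submodule.subset_span (Or.inl ⟨w, rfl⟩)
    rw [hq]
    simp [h4]
  -- transport back and use right exactness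
  have hy0 : (LinearMap.lTensor M D.mkQ) (∑ j, m j ⊗ₜ Pi.single j (1 : R)) = 0 := by
    have h5 := congrArg (LinearMap.lTensor M (e.symm.toLinearMap)) hx0
    simp only [hx, hq, map_sum, LinearMap.lTensor_tmul, map_zero] at h5
    simp only [LinearMap.coe_comp, LinearEquiv.coe_coe, Function.comp_apply,
      LinearEquiv.symm_apply_apply] at h5
    rw [map_sum]
    simp only [LinearMap.lTensor_tmul]; exact h5
  have hyr : (∑ j, m j ⊗ₜ Pi.single j (1 : R)) ∈
      LinearMap.range (LinearMap.lTensor M D.subtype) := by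
    rw [← lTensor_mkQ]
    exact hy0
  obtain ⟨y, hy⟩ := hyr
  -- evaluation maps
  set Ψ : M ⊗[R] (Fin t → R) →ₗ[R] (Fin t → M) :=
    LinearMap.pi (fun j => (TensorProduct.rid R M).toLinearMap ∘ₗ
      (LinearMap.lTensor M (LinearMap.proj j))) with hΨ
  set G' : Set (Fin t → M) :=
    {p | ∃ (w : M →ₗ[R] R) (u : M), p = fun j => w (m j) • u} with hG'
  have key : ∀ z : M ⊗[R] D, Ψ (LinearMap.lTensor M D.subtype z) ∈ Submodule.span R G' := by
    intro z
    induction z using TensorProduct.induction_on with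
    | zero => simp
    | add a b ha hb => rw [map_add, map_add]; exact Submodule.add_mem _ ha hb
    | tmul uu d =>
      set B : (Fin t → R) →ₗ[R] (Fin t → M) :=
        LinearMap.pi (fun j => LinearMap.toSpanSingleton R M uu ∘ₗ LinearMap.proj j) with hB
      have h1 : Ψ (LinearMap.lTensor M D.subtype (uu ⊗ₜ d)) = B (d : Fin t → R) := by
        funext j
        simp [hΨ, hB, LinearMap.lTensor_tmul, LinearMap.toSpanSingleton_apply]
      rw [h1]
      have hsub : Submodule.map B D ≤ Submodule.span R G' := by
        rw [hD, Submodule.map_span, Submodule.span_le]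
        rintro _ ⟨f, hf, rfl⟩
        rcases hf with ⟨w, rfl⟩ | hKf
        · apply Submodule.subset_span
          exact ⟨w, uu, by funext j; simp [hB, LinearMap.toSpanSingleton_apply]⟩
        · have hB0 : B f = 0 := by
            funext j
            simpa [hB, LinearMap.toSpanSingleton_apply] using
              Module.mem_annihilator.mp (hKf j) uu
          rw [hB0]
          exact Submodule.zero_mem _
      exact hsub ⟨(d : Fin t → R), d.2, rfl⟩
  have hm : (fun j => m j) ∈ Submodule.span R G' := by
    have hΨy : Ψ (∑ j, m j ⊗ₜ Pi.single j (1 : R)) = fun j => m j := by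
      funext j
      simp only [hΨ, map_sum, LinearMap.pi_apply, Finset.sum_apply]
      have h7 : ∀ i : Fin t,
          ((TensorProduct.rid R M).toLinearMap ∘ₗ (LinearMap.lTensor M (LinearMap.proj j)))
            (m i ⊗ₜ (Pi.single i (1 : R) : Fin t → R)) = (Pi.single i (1 : R) : Fin t → R) j • m i := by
        intro i
        simp [LinearMap.lTensor_tmul]
      simp only [h7]
      have h8 : ∀ i : Fin t, (Pi.single i (1 : R) : Fin t → R) j • m i = if j = i then m i else 0 := by
        intro i
        rcases eq_or_ne j i with rfl | hne
        · simp
        · rw [Pi.single_eq_of_ne hne, if_neg hne, zero_smul]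
      simp only [h8]
      simp
    rw [← hΨy, ← hy]
    exact key y
  obtain ⟨k, c, g, hg⟩ := Submodule.mem_span_set'.mp hm
  choose w u hw using fun i => (g i).2
  refine ⟨k, w, fun i => c i • u i, fun j => ?_⟩
  have h6 := congrFun hg j
  rw [Finset.sum_apply] at h6
  simp only [Pi.smul_apply, hw] at h6
  calc m j = ∑ i, c i • (w i) (m j) • u i := h6.symm
    _ = ∑ i, (w i) (m j) • c i • u i := by
        apply Finset.sum_congr rfl
        intro i _
        rw [smul_comm]


@[simp] lemma prodMap_tmul {I : Type*} (iota : M →ₗ[R] (I → R)) {S : Type*} [CommRing S]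
    [Algebra R S] (m : M) (s : S) :
    prodMap R M I iota S (m ⊗ₜ s) = fun i => iota m i • s := rfl

theorem forward
    (h : ∀ (N : Type v) [AddCommGroup N] [Module R N], Function.Injective (natMap R M N)) :
    ∃ (I : Type v) (iota : M →ₗ[R] (I → R)),
      ∀ (S : Type v) [CommRing S] [Algebra R S],
        Function.Injective (prodMap R M I iota S) := by
  classical
  choose k w u hdual using fun p : (Σ t : ℕ, Fin t → M) => dualSystem h p.1 p.2
  set W : ((Σ t : ℕ, Fin t → M) × ℕ) → (M →ₗ[R] R) :=
    fun i => if hlt : i.2 < k i.1 then w i.1 ⟨i.2, hlt⟩ else 0 with hW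
  refine ⟨(Σ t : ℕ, Fin t → M) × ℕ, LinearMap.pi (fun i => W i), ?_⟩
  intro S _ _
  set iot : M →ₗ[R] ((Σ t : ℕ, Fin t → M) × ℕ) → R := LinearMap.pi (fun i => W i) with hiot
  have main : ∀ x : M ⊗[R] S, prodMap R M _ iot S x = 0 → x = 0 := by
    intro x hx
    obtain ⟨n, c, g, hg⟩ := Submodule.mem_span_set'.mp
      (by rw [TensorProduct.span_tmul_eq_top]; trivial :
        x ∈ Submodule.span R { t : M ⊗[R] S | ∃ m n, m ⊗ₜ n = t })
    choose mm ss hms using fun i => (g i).2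
    have hrep : x = ∑ j, mm j ⊗ₜ[R] (c j • ss j) := by
      rw [← hg]
      apply Finset.sum_congr rfl
      intro j _
      rw [← hms j, TensorProduct.tmul_smul]
    have hd : ∀ j : Fin n, mm j
        = ∑ i : Fin (k ⟨n, mm⟩), w ⟨n, mm⟩ i (mm j) • u ⟨n, mm⟩ i := hdual ⟨n, mm⟩
    have hx2 : x = ∑ i : Fin (k ⟨n, mm⟩),
        u ⟨n, mm⟩ i ⊗ₜ[R] (∑ j, w ⟨n, mm⟩ i (mm j) • (c j • ss j)) := by
      rw [hrep]
      have step1 : ∀ j : Fin n, mm j ⊗ₜ[R] (c j • ss j)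
          = ∑ i : Fin (k ⟨n, mm⟩), u ⟨n, mm⟩ i ⊗ₜ[R] (w ⟨n, mm⟩ i (mm j) • (c j • ss j)) := by
        intro j
        conv_lhs => rw [hd j]
        rw [TensorProduct.sum_tmul]
        apply Finset.sum_congr rfl
        intro i _
        rw [TensorProduct.smul_tmul]
      simp only [step1]
      rw [Finset.sum_comm]
      apply Finset.sum_congr rfl
      intro i _
      rw [TensorProduct.tmul_sum]
    have hp0 : ∀ i : Fin (k ⟨n, mm⟩), (∑ j, w ⟨n, mm⟩ i (mm j) • (c j • ss j)) = 0 := by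
      intro i
      have hxi := congrFun hx ((⟨n, mm⟩ : Σ t : ℕ, Fin t → M), (i : ℕ))
      rw [hrep, map_sum] at hxi
      simp only [prodMap_tmul, Finset.sum_apply, Pi.zero_apply] at hxi
      have hiotval : ∀ j : Fin n,
          iot (mm j) ((⟨n, mm⟩ : Σ t : ℕ, Fin t → M), (i : ℕ)) = w ⟨n, mm⟩ i (mm j) := by
        intro j
        rw [hiot]
        simp only [LinearMap.pi_apply, hW]
        rw [dif_pos i.isLt]
      rw [← hxi]
      apply Finset.sum_congr rfl
      intro j _
      rw [hiotval j]
    rw [hx2]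
    simp only [hp0, TensorProduct.tmul_zero, Finset.sum_const, smul_zero]
  intro a b hab
  have := main (a - b) (by rw [map_sub, hab, sub_self])
  exact sub_eq_zero.mp this
theorem backward {I : Type v} (iota : M →ₗ[R] (I → R))
    (hinj : ∀ (S : Type v) [CommRing S] [Algebra R S],
      Function.Injective (prodMap R M I iota S))
    (N : Type v) [AddCommGroup N] [Module R N] :
    Function.Injective (natMap R M N) := by
  classical
  set K := Module.annihilator R N with hK
  have hT : Module.IsTorsionBySet R N K := Module.isTorsionBySet_annihilator R N
  letI : Module (R ⧸ K) N := hT.module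
  letI : Module (R ⧸ K)ᵐᵒᵖ N :=
    Module.compHom N ((RingHom.id (R ⧸ K)).fromOpposite mul_comm)
  haveI : IsCentralScalar (R ⧸ K) N := ⟨fun r n => rfl⟩
  haveI : SMulCommClass (R ⧸ K) (R ⧸ K)ᵐᵒᵖ N := ⟨fun a b n => by
    show a • (MulOpposite.unop b) • n = (MulOpposite.unop b) • a • n
    rw [← mul_smul, mul_comm, mul_smul]⟩
  haveI : IsScalarTower R (R ⧸ K) N := hT.isScalarTower (S := R)
  set S0 := TrivSqZeroExt (R ⧸ K) N with hS0
  haveI : Small.{v} (R ⧸ K) := small_quot_ann (M := N)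
  haveI : Small.{v} S0 := small_of_injective
    (f := fun x : S0 => ((x.fst, x.snd) : (R ⧸ K) × N))
    (fun a b hab => TrivSqZeroExt.ext (congrArg Prod.fst hab) (congrArg Prod.snd hab))
  set S := Shrink.{v} S0 with hS
  set ee : S0 ≃ₗ[R] S := (Shrink.algEquiv R S0).symm.toLinearEquiv with hee
  set jmap : N →ₗ[R] S0 :=
    { toFun := fun n => TrivSqZeroExt.inr n,
      map_add' := fun a b => by
        show (TrivSqZeroExt.inr (a + b) : S0) = TrivSqZeroExt.inr a + TrivSqZeroExt.inr b
        exact TrivSqZeroExt.inr_add _ a b,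
      map_smul' := fun r n => by
        show (TrivSqZeroExt.inr (r • n) : S0) = r • TrivSqZeroExt.inr n
        refine TrivSqZeroExt.ext ?_ ?_
        · rw [TrivSqZeroExt.fst_smul, TrivSqZeroExt.fst_inr, TrivSqZeroExt.fst_inr, smul_zero]
        · rw [TrivSqZeroExt.snd_smul, TrivSqZeroExt.snd_inr, TrivSqZeroExt.snd_inr] } with hjmap
  set smap : S0 →ₗ[R] N :=
    { toFun := fun x => x.snd,
      map_add' := fun a b => TrivSqZeroExt.snd_add a b,
      map_smul' := fun r x => by
        show (r • x : S0).snd = r • x.snd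
        rw [TrivSqZeroExt.snd_smul] } with hsmap
  set js : N →ₗ[R] S := ee.toLinearMap ∘ₗ jmap with hjs
  set gs : S →ₗ[R] N := smap ∘ₗ ee.symm.toLinearMap with hgs
  have hgj : gs ∘ₗ js = LinearMap.id := by
    ext n
    simp only [hgs, hjs, LinearMap.coe_comp, Function.comp_apply, LinearEquiv.coe_coe,
      LinearEquiv.symm_apply_apply, LinearMap.id_apply]
    show (TrivSqZeroExt.inr n : S0).snd = n
    exact TrivSqZeroExt.snd_inr _ n
  have main : ∀ x : M ⊗[R] N, natMap R M N x = 0 → x = 0 := by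
    intro x hx
    have h1 : prodMap R M I iota S (LinearMap.lTensor M js x) = 0 := by
      funext i
      have hcomp : (LinearMap.proj i) ∘ₗ ((prodMap R M I iota S) ∘ₗ (LinearMap.lTensor M js))
          = js ∘ₗ ((LinearMap.applyₗ ((LinearMap.proj i) ∘ₗ iota)) ∘ₗ (natMap R M N)) := by
        apply TensorProduct.ext'
        intro m nn
        show iota m i • js nn
          = js ((natMap R M N) (m ⊗ₜ nn) ((LinearMap.proj i) ∘ₗ iota))
        rw [natMap_tmul, map_smul]
        rfl
      have h2 := LinearMap.congr_fun hcomp x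
      simp only [LinearMap.coe_comp, Function.comp_apply] at h2
      rw [hx] at h2
      simpa using h2
    have h3 : LinearMap.lTensor M js x = 0 := hinj S (by rw [h1, map_zero])
    have h4 : LinearMap.lTensor M gs (LinearMap.lTensor M js x) = x := by
      rw [← LinearMap.lTensor_comp_apply, hgj, LinearMap.lTensor_id, LinearMap.id_apply]
    rw [h3, map_zero] at h4
    exact h4.symm
  intro a b hab
  have := main (a - b) (by rw [map_sub, hab, sub_self])
  exact sub_eq_zero.mp this


theorem stmt6 (R : Type u) [CommRing R] (M : Type v) [AddCommGroup M] [Module R M] :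
    (∀ (N : Type v) [AddCommGroup N] [Module R N], Function.Injective (natMap R M N)) ↔
      ∃ (I : Type v) (iota : M →ₗ[R] (I → R)),
        ∀ (S : Type v) [CommRing S] [Algebra R S],
          Function.Injective (prodMap R M I iota S) := by
  constructor
  · intro h
    exact forward h
  · rintro ⟨I, iota, hinj⟩ N _ _
    exact backward iota hinj N
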